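/- Run SeqPAV on an approval profile; for each voter i let a_i(t) denote the number of alternatives in A_i ranked before step t, and let T(t) = Σ_{i∈N} 1/(a_i(t)+1). Let N' ⊆ N be a group with |N'| = n', let λ ≥ 1 be an integer, and suppose that before step t some alternative approved by all voters of N' is still unranked and Σ_{i∈N'} a_i(t) < λ·n'. Then T(t) − T(t+1) > (1/(2n))·(n'/(λ+1))². -/

import Mathlib

open Finset

/-- The set of the top `k` alternatives of the ranking `r`
(where `r j` is the alternative at position `j`). -/
def topk {m : ℕ} (r : Fin m ≃ Fin m) (k : ℕ) : Finset (Fin m) :=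
  Finset.univ.filter fun a => (r.symm a : ℕ) < k

/-- Average representation of the group `N'` with respect to the set `S`. -/
def avgRep {n m : ℕ} (App : Fin n → Finset (Fin m)) (N' : Finset (Fin n))
    (S : Finset (Fin m)) : ℚ :=
  (∑ i ∈ N', ((App i ∩ S).card : ℚ)) / (N'.card : ℚ)

/-- `N'` is `(α, λ)`-significant: it has `⌈αn⌉` members and cohesiveness at least `λ`. -/
def Significant {n m : ℕ} (App : Fin n → Finset (Fin m)) (α : ℚ) (lam : ℕ)
    (N' : Finset (Fin n)) : Prop :=
  (N'.card : ℤ) = ⌈α * (n : ℚ)⌉ ∧ lam ≤ (N'.inf App).card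

/-- The PAV-score of a set `S` of alternatives: `∑_i ∑_{j=1}^{|A_i ∩ S|} 1/j`. -/
def pavScore {n m : ℕ} (App : Fin n → Finset (Fin m)) (S : Finset (Fin m)) : ℚ :=
  ∑ i, ∑ j ∈ Finset.range (App i ∩ S).card, (1 : ℚ) / (j + 1)

/-- `r` is a SeqPAV ranking: at every step, the alternative placed next has maximal
marginal PAV-score among all still-unranked alternatives. -/
def IsSeqPAVRanking {n m : ℕ} (App : Fin n → Finset (Fin m)) (r : Fin m ≃ Fin m) : Prop :=
  ∀ t : Fin m, ∀ b : Fin m, (t : ℕ) ≤ (r.symm b : ℕ) →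
    pavScore App (insert b (topk r (t : ℕ))) - pavScore App (topk r (t : ℕ)) ≤
    pavScore App (insert (r t) (topk r (t : ℕ))) - pavScore App (topk r (t : ℕ))

/-- `a_i(t)` of the proof of Theorem 4: the number of alternatives of `A_i` that are
ranked before the step placing the alternative at position `t` (0-indexed), i.e.
before step `t+1` (1-indexed). -/
def rankedApproved {n m : ℕ} (App : Fin n → Finset (Fin m)) (r : Fin m ≃ Fin m)
    (t : ℕ) (i : Fin n) : ℕ :=
  (App i ∩ topk r t).card

/-- `T(t)` of the proof of Theorem 4: `∑_{i ∈ N} 1/(a_i(t)+1)`. -/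
def potentialT {n m : ℕ} (App : Fin n → Finset (Fin m)) (r : Fin m ≃ Fin m)
    (t : ℕ) : ℚ :=
  ∑ i, (1 : ℚ) / (rankedApproved App r t i + 1)

/-! ### Auxiliary lemmas -/

lemma not_mem_topk {m : ℕ} (r : Fin m ≃ Fin m) (b : Fin m) (k : ℕ)
    (h : k ≤ (r.symm b : ℕ)) : b ∉ topk r k := by
  simp only [topk, mem_filter, mem_univ, true_and, not_lt]
  exact h

lemma topk_succ {m : ℕ} (r : Fin m ≃ Fin m) (t : Fin m) :
    topk r ((t : ℕ) + 1) = insert (r t) (topk r (t : ℕ)) := by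
  ext a
  simp only [topk, mem_filter, mem_univ, true_and, mem_insert, Nat.lt_succ_iff_lt_or_eq]
  constructor
  · rintro (h | h)
    · exact Or.inr h
    · left
      have : r.symm a = t := Fin.ext h
      rw [← this, Equiv.apply_symm_apply]
  · rintro (h | h)
    · right; rw [h, Equiv.symm_apply_apply]
    · exact Or.inl h

lemma card_inter_insert {m : ℕ} (A S : Finset (Fin m)) (b : Fin m) (hb : b ∉ S) :
    (A ∩ insert b S).card = (A ∩ S).card + (if b ∈ A then 1 else 0) := by
  by_cases hbA : b ∈ A
  · rw [if_pos hbA]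
    have he : A ∩ insert b S = insert b (A ∩ S) := by
      ext x; simp only [mem_inter, mem_insert]
      constructor
      · rintro ⟨hx, rfl | hs⟩
        · exact Or.inl rfl
        · exact Or.inr ⟨hx, hs⟩
      · rintro (rfl | ⟨hx, hs⟩)
        · exact ⟨hbA, Or.inl rfl⟩
        · exact ⟨hx, Or.inr hs⟩
    rw [he, card_insert_of_notMem (by simp [hb])]
  · rw [if_neg hbA, add_zero]
    congr 1
    ext x; simp only [mem_inter, mem_insert]
    constructor
    · rintro ⟨hx, rfl | hs⟩
      · exact absurd hx hbA
      · exact ⟨hx, hs⟩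
    · rintro ⟨hx, hs⟩; exact ⟨hx, Or.inr hs⟩

lemma pav_gain {n m : ℕ} (App : Fin n → Finset (Fin m)) (S : Finset (Fin m))
    (b : Fin m) (hb : b ∉ S) :
    pavScore App (insert b S) - pavScore App S
      = ∑ i, (if b ∈ App i then (1:ℚ)/(((App i ∩ S).card : ℚ) + 1) else 0) := by
  unfold pavScore
  rw [← Finset.sum_sub_distrib]
  refine Finset.sum_congr rfl fun i _ => ?_
  rw [card_inter_insert (App i) S b hb]
  by_cases hbA : b ∈ App i
  · rw [if_pos hbA, if_pos hbA, Finset.sum_range_succ]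
    push_cast
    ring
  · rw [if_neg hbA, if_neg hbA]
    simp

lemma helperA (K L : ℚ) (hK : 0 < K) (hL : 0 < L) : 2/L - K/L^2 ≤ 1/K := by
  rw [div_sub_div _ _ hL.ne' (by positivity), div_le_div_iff₀ (by positivity) hK]
  nlinarith [sq_nonneg (K - L)]

lemma helperC (k : ℚ) (hk : 0 ≤ k) : (1/(k+1))^2/2 ≤ 1/(k+1) - 1/(k+1+1) := by
  have h1 : (0:ℚ) < k+1 := by linarith
  have h2 : (0:ℚ) < k+1+1 := by linarith
  rw [div_sub_div _ _ h1.ne' h2.ne', div_pow, one_pow, div_div,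
    div_le_div_iff₀ (by positivity) (by positivity)]
  nlinarith

set_option maxHeartbeats 1000000

theorem seqpav_potential_drop
    {n m : ℕ} (App : Fin n → Finset (Fin m)) (hApp : ∀ i, (App i).Nonempty)
    (r : Fin m ≃ Fin m) (hr : IsSeqPAVRanking App r)
    (N' : Finset (Fin n)) (lam : ℕ) (hlam : 1 ≤ lam) (t : Fin m)
    (hunranked : ∃ h : Fin m, (∀ i ∈ N', h ∈ App i) ∧ (t : ℕ) ≤ (r.symm h : ℕ))
    (hsat : ∑ i ∈ N', rankedApproved App r (t : ℕ) i < lam * N'.card) :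
    1 / (2 * (n : ℚ)) * ((N'.card : ℚ) / ((lam : ℚ) + 1)) ^ 2 <
      potentialT App r (t : ℕ) - potentialT App r ((t : ℕ) + 1) := by
  obtain ⟨h, hhApp, hhu⟩ := hunranked
  have hcS : r t ∉ topk r (t : ℕ) := not_mem_topk r (r t) (t : ℕ) (by simp)
  have hhS : h ∉ topk r (t : ℕ) := not_mem_topk r h (t : ℕ) hhu
  set S := topk r (t : ℕ) with hSdef
  set c := r t with hcdef
  set x : Fin n → ℚ := fun i => (1:ℚ)/(((App i ∩ S).card : ℚ) + 1) with hxdef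
  set y : Fin n → ℚ := fun i => if c ∈ App i then x i else 0 with hydef
  have hxpos : ∀ i, 0 < x i := fun i => by
    rw [hxdef]; positivity
  have hynn : ∀ i, 0 ≤ y i := fun i => by
    rw [hydef]; dsimp only; split
    · exact (hxpos i).le
    · exact le_refl _
  -- group sizes
  have hn'pos : 0 < N'.card := by
    rcases Nat.eq_zero_or_pos N'.card with h0 | h0
    · rw [Finset.card_eq_zero] at h0
      subst h0
      simp at hsat
    · exact h0
  have hnpos : 0 < n := by
    obtain ⟨i, -⟩ := Finset.card_pos.mp hn'pos
    exact i.pos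
  have hnQ : (0:ℚ) < (n:ℚ) := by exact_mod_cast hnpos
  set L : ℚ := (lam : ℚ) + 1 with hLdef
  have hL : (0:ℚ) < L := by positivity
  set δ : ℚ := (N'.card : ℚ) / L with hδdef
  have hδpos : 0 < δ := by
    rw [hδdef]
    have : (0:ℚ) < (N'.card : ℚ) := by exact_mod_cast hn'pos
    positivity
  -- Step A : δ < ∑_{i ∈ N'} x i
  have hApt : ∀ i ∈ N', 2/L - (((App i ∩ S).card : ℚ) + 1)/L^2 ≤ x i := by
    intro i _
    rw [hxdef]
    exact helperA _ _ (by positivity) hL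
  have hsumA := Finset.sum_le_sum hApt
  have hcastsum : ∑ i ∈ N', (((App i ∩ S).card : ℚ) + 1) ≤ L * (N'.card : ℚ) - 1 := by
    have h1 : ∑ i ∈ N', (App i ∩ S).card + 1 ≤ lam * N'.card := hsat
    have h2 : ((∑ i ∈ N', (App i ∩ S).card : ℕ) : ℚ) + 1 ≤ (lam : ℚ) * (N'.card : ℚ) := by
      exact_mod_cast h1
    rw [Finset.sum_add_distrib, Finset.sum_const, nsmul_eq_mul, mul_one]
    push_cast at h2 ⊢
    rw [hLdef]
    ring_nf
    ring_nf at h2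
    linarith
  have hA : δ < ∑ i ∈ N', x i := by
    have hLHS : ∑ i ∈ N', (2/L - (((App i ∩ S).card : ℚ) + 1)/L^2)
        = (N'.card : ℚ) * (2/L) - (∑ i ∈ N', (((App i ∩ S).card : ℚ) + 1))/L^2 := by
      rw [Finset.sum_sub_distrib, Finset.sum_const, nsmul_eq_mul, ← Finset.sum_div]
    rw [hLHS] at hsumA
    have hmono : (∑ i ∈ N', (((App i ∩ S).card : ℚ) + 1))/L^2 ≤ (L * (N'.card : ℚ) - 1)/L^2 := by
      apply div_le_div_of_nonneg_right hcastsum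
      positivity
    have hkey : δ < (N'.card : ℚ) * (2/L) - (L * (N'.card : ℚ) - 1)/L^2 := by
      have he : (N'.card : ℚ) * (2/L) - (L * (N'.card : ℚ) - 1)/L^2 = δ + 1/L^2 := by
        rw [hδdef]
        field_simp
        ring
      rw [he]
      have : (0:ℚ) < 1/L^2 := by positivity
      linarith
    linarith
  -- Step B : seqPAV comparison, δ < ∑ i, y i
  have hseq := hr t h hhu
  rw [← hSdef, ← hcdef, pav_gain App S h hhS, pav_gain App S c hcS] at hseq
  have hB : δ < ∑ i, y i := by
    have h1 : ∑ i ∈ N', x i ≤ ∑ i, (if h ∈ App i then x i else 0) := by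
      have he : ∑ i ∈ N', x i = ∑ i ∈ N', (if h ∈ App i then x i else 0) :=
        Finset.sum_congr rfl fun i hi => by rw [if_pos (hhApp i hi)]
      rw [he]
      refine Finset.sum_le_sum_of_subset_of_nonneg (Finset.subset_univ N') fun i _ _ => ?_
      split
      · exact (hxpos i).le
      · exact le_refl _
    have h2 : ∑ i, (if h ∈ App i then x i else 0) ≤ ∑ i, y i := by
      rw [hydef, hxdef] at *
      exact hseq
    linarith
  -- Step C : potential drop ≥ (∑ y²)/2
  have hdropeq : potentialT App r (t:ℕ) - potentialT App r ((t:ℕ)+1)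
      = ∑ i, (x i - 1/((((App i ∩ S).card : ℚ) + (if c ∈ App i then 1 else 0)) + 1)) := by
    unfold potentialT rankedApproved
    rw [← Finset.sum_sub_distrib]
    refine Finset.sum_congr rfl fun i _ => ?_
    rw [topk_succ, ← hSdef, ← hcdef, card_inter_insert _ _ _ hcS, hxdef]
    push_cast
    split <;> norm_num
  have hdropge : ∀ i ∈ (Finset.univ : Finset (Fin n)),
      (y i)^2/2 ≤ x i - 1/((((App i ∩ S).card : ℚ) + (if c ∈ App i then 1 else 0)) + 1) := by
    intro i _
    by_cases hci : c ∈ App i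
    · rw [hydef, hxdef]
      dsimp only
      rw [if_pos hci, if_pos hci]
      exact helperC _ (by positivity)
    · rw [hydef, hxdef]
      dsimp only
      rw [if_neg hci, if_neg hci]
      norm_num
  have hC : (∑ i, (y i)^2)/2 ≤ potentialT App r (t:ℕ) - potentialT App r ((t:ℕ)+1) := by
    rw [hdropeq, Finset.sum_div]
    exact Finset.sum_le_sum hdropge
  -- Step D : ∑ y² > δ²/n  via tangent-line trick at c₀ := δ/n
  set c₀ : ℚ := δ / n with hc₀def
  have hc₀pos : 0 < c₀ := by rw [hc₀def]; positivity
  have hDpt : ∀ i ∈ (Finset.univ : Finset (Fin n)), 2*c₀*(y i) - c₀^2 ≤ (y i)^2 :=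
    fun i _ => by nlinarith [sq_nonneg (y i - c₀)]
  have hDsum := Finset.sum_le_sum hDpt
  rw [Finset.sum_sub_distrib, Finset.sum_const, ← Finset.mul_sum,
    Finset.card_univ, Fintype.card_fin, nsmul_eq_mul] at hDsum
  have hnc₀ : (n:ℚ) * c₀ = δ := by
    rw [hc₀def, mul_comm, div_mul_cancel₀ δ hnQ.ne']
  have hD : δ * c₀ < ∑ i, (y i)^2 := by
    have h1 : 2*c₀*δ < 2*c₀*(∑ i, y i) := by
      apply mul_lt_mul_of_pos_left hB
      positivity
    have h2 : (n:ℚ) * c₀^2 = δ * c₀ := by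
      rw [pow_two, ← mul_assoc, hnc₀]
    linarith
  -- conclusion
  have htarget : 1 / (2 * (n : ℚ)) * ((N'.card : ℚ) / ((lam : ℚ) + 1)) ^ 2 = δ * c₀ / 2 := by
    rw [hc₀def, hδdef, hLdef]
    field_simp
  rw [htarget]
  linarith
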